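/- Let σ ∈ Sₙ be a product of j pairwise disjoint cycles of lengths k₁,…,k_j with kᵢ ≥ 2. Then σ⁻¹ can be written as a product of pairwise distinct transpositions in S_{n+2}, each of which moves at least one of the two extra elements x = n+1, y = n+2. -/

import Mathlib

open Equiv List

lemma swap_inj_aux {n x y u v u' v' : ℕ} (hxn : n < x) (hyn : n < y)
    (hu : u = x ∨ u = y) (hu' : u' = x ∨ u' = y) (hv : v ≤ n) (hv' : v' ≤ n)
    (h : Equiv.swap u v = Equiv.swap u' v') : u = u' ∧ v = v' := by
  have h1 := DFunLike.congr_fun h v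
  have h2 := DFunLike.congr_fun h v'
  simp [Equiv.swap_apply_def] at h1 h2
  split_ifs at h1 h2 <;> omega

lemma S_prod (x : ℕ) : ∀ (m : List ℕ), (x :: m).Nodup →
    (m.map (Equiv.swap x ·)).prod = formPerm (x :: m.reverse) := by
  intro m
  induction m with
  | nil => simp
  | cons a m ih =>
    intro h
    have hnd : (x :: m).Nodup := by
      simp only [nodup_cons, mem_cons] at h ⊢; tauto
    have hrot : (a :: x :: m.reverse).rotate 1 = x :: m.reverse ++ [a] := by
      simp [List.rotate_cons_succ]
    have hnd2 : (a :: x :: m.reverse).Nodup := by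
      simp only [nodup_cons, mem_cons, mem_reverse, nodup_reverse] at h ⊢
      tauto
    calc ((a :: m).map (Equiv.swap x ·)).prod
        = Equiv.swap x a * (m.map (Equiv.swap x ·)).prod := by simp
      _ = Equiv.swap x a * formPerm (x :: m.reverse) := by rw [ih hnd]
      _ = formPerm (a :: x :: m.reverse) := by
          rw [formPerm_cons_cons, Equiv.swap_comm]
      _ = formPerm (x :: (a :: m).reverse) := by
          rw [← formPerm_rotate_one _ hnd2, hrot]; simp

lemma formPerm_concat (r : List ℕ) (hr : r ≠ []) (c : ℕ) :
    formPerm (r ++ [c]) = formPerm r * Equiv.swap (r.getLast hr) c := by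
  induction r using List.reverseRecOn with
  | nil => simp at hr
  | append_singleton r' a _ =>
    rw [List.append_assoc]
    simpa using formPerm_append_pair r' a c
set_option maxHeartbeats 1000000 in
lemma swap_identity {n a d x y : ℕ} (hxn : n < x) (hyn : n < y) (hxy : x ≠ y)
    (ha : a ≤ n) (hd : d ≤ n) (had : a ≠ d) :
    Equiv.swap a x * Equiv.swap y d * Equiv.swap x d * Equiv.swap y a
      = Equiv.swap a d * Equiv.swap x y := by
  ext z
  simp only [Equiv.Perm.mul_apply, Equiv.swap_apply_def]
  split_ifs <;> omega

lemma cycle_word {n x y : ℕ} (hxn : n < x) (hyn : n < y) (hxy : x ≠ y)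
    (l : List ℕ) (hnd : l.Nodup) (hlen : 2 ≤ l.length) (hmem : ∀ v ∈ l, v ≤ n) :
    ∃ w : List (Equiv.Perm ℕ), w.prod = (formPerm l)⁻¹ * Equiv.swap x y ∧ w.Nodup ∧
      ∀ t ∈ w, ∃ u v, (u = x ∨ u = y) ∧ v ∈ l ∧ t = Equiv.swap u v := by
  match l, hlen with
  | a :: b :: t, _ =>
  set l : List ℕ := a :: b :: t with hl
  have hlne : l ≠ [] := by simp [hl]
  set d := l.getLast hlne with hd
  set D := l.dropLast with hD
  have hDd : D ++ [d] = l := List.dropLast_append_getLast hlne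
  have hdl : d ∈ l := List.getLast_mem hlne
  have hDsub : D.Sublist l := List.dropLast_sublist l
  have hDl : ∀ v ∈ D, v ∈ l := fun v hv => hDsub.mem hv
  have hDnd : D.Nodup := hnd.sublist hDsub
  have hdD : d ∉ D := by
    have := hnd
    rw [← hDd, List.nodup_append] at this
    intro hc
    exact this.2.2 d hc d (by simp) rfl
  have haD : a ∈ D := by
    have : D = a :: (b :: t).dropLast := by simp [hD, hl]
    simp [this]
  have had : a ≠ d := fun h => hdD (h ▸ haD)
  have hDne : D ≠ [] := by intro h; rw [h] at haD; simp at haD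
  have hal : a ∈ l := by simp [hl]
  have hxl : x ∉ l := fun h => absurd (hmem x h) (by omega)
  have hyl : y ∉ l := fun h => absurd (hmem y h) (by omega)
  refine ⟨D.map (Equiv.swap x ·) ++ [Equiv.swap y d, Equiv.swap x d, Equiv.swap y a], ?_, ?_, ?_⟩
  · -- product
    have hxD : (x :: D).Nodup := by
      simp only [nodup_cons]
      exact ⟨fun h => hxl (hDl x h), hDnd⟩
    rw [List.prod_append, S_prod x D hxD]
    have hrne : D.reverse ≠ [] := by simpa using hDne
    have hlast : D.reverse.getLast hrne = a := by
      have h1 : D.reverse.getLast? = D.head? := List.getLast?_reverse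
      have h2 : D.head? = some a := by
        have : D = a :: (b :: t).dropLast := by simp [hD, hl]
        simp [this]
      have h3 := List.getLast?_eq_getLast hrne
      rw [h3, h2] at h1
      exact Option.some_injective _ h1
    have hndxr : (x :: D.reverse).Nodup := by
      simp only [nodup_cons, mem_reverse, nodup_reverse]
      exact ⟨fun h => hxl (hDl x h), hDnd⟩
    have hnddr : (d :: D.reverse).Nodup := by
      simp only [nodup_cons, mem_reverse, nodup_reverse]
      exact ⟨hdD, hDnd⟩
    have e1 : formPerm (x :: D.reverse) = formPerm D.reverse * Equiv.swap a x := by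
      rw [← formPerm_rotate_one _ hndxr]
      have : (x :: D.reverse).rotate 1 = D.reverse ++ [x] := by
        simp [List.rotate_cons_succ]
      rw [this, formPerm_concat _ hrne, hlast]
    have e2 : (formPerm l)⁻¹ = formPerm D.reverse * Equiv.swap a d := by
      rw [← formPerm_reverse, ← hDd]
      have : (D ++ [d]).reverse = d :: D.reverse := by simp
      rw [this, ← formPerm_rotate_one _ hnddr]
      have h4 : (d :: D.reverse).rotate 1 = D.reverse ++ [d] := by
        simp [List.rotate_cons_succ]
      rw [h4, formPerm_concat _ hrne, hlast]
    rw [e1, e2]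
    have hamem := hmem a hal
    have hdmem := hmem d hdl
    rw [List.prod_cons, List.prod_cons, List.prod_cons, List.prod_nil, mul_one,
      ← mul_assoc, ← mul_assoc, mul_assoc (formPerm D.reverse), mul_assoc (formPerm D.reverse),
      mul_assoc (formPerm D.reverse),
      swap_identity hxn hyn hxy hamem hdmem had, ← mul_assoc]
  · -- nodup
    rw [List.nodup_append]
    refine ⟨?_, ?_, ?_⟩
    · refine hDnd.map_on ?_
      intro v hv v' hv' h
      exact (swap_inj_aux hxn hyn (Or.inl rfl) (Or.inl rfl) (hmem v (hDl v hv))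
        (hmem v' (hDl v' hv')) h).2
    · have h12 : Equiv.swap y d ≠ Equiv.swap x d := fun h =>
        hxy ((swap_inj_aux hxn hyn (Or.inr rfl) (Or.inl rfl) (hmem d hdl) (hmem d hdl) h).1).symm
      have h13 : Equiv.swap y d ≠ Equiv.swap y a := fun h =>
        had.symm ((swap_inj_aux hxn hyn (Or.inr rfl) (Or.inr rfl) (hmem d hdl) (hmem a hal) h).2)
      have h23 : Equiv.swap x d ≠ Equiv.swap y a := fun h =>
        hxy ((swap_inj_aux hxn hyn (Or.inl rfl) (Or.inr rfl) (hmem d hdl) (hmem a hal) h).1)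
      simp [List.nodup_cons, h12, h13, h23]
    · intro s hs _ hs' rfl
      simp only [List.mem_map] at hs
      obtain ⟨v, hv, rfl⟩ := hs
      simp only [mem_cons, mem_singleton, not_mem_nil, or_false] at hs'
      rcases hs' with h | h | h
      · exact hxy (swap_inj_aux hxn hyn (Or.inl rfl) (Or.inr rfl) (hmem v (hDl v hv)) (hmem d hdl) h).1
      · exact hdD ((swap_inj_aux hxn hyn (Or.inl rfl) (Or.inl rfl) (hmem v (hDl v hv)) (hmem d hdl) h).2 ▸ hv)
      · exact hxy (swap_inj_aux hxn hyn (Or.inl rfl) (Or.inr rfl) (hmem v (hDl v hv)) (hmem a hal) h).1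
  · -- membership
    intro s hs
    rw [List.mem_append] at hs
    rcases hs with hs | hs
    · simp only [List.mem_map] at hs
      obtain ⟨v, hv, rfl⟩ := hs
      exact ⟨x, v, Or.inl rfl, hDl v hv, rfl⟩
    · simp only [mem_cons, mem_singleton, not_mem_nil, or_false] at hs
      rcases hs with rfl | rfl | rfl
      · exact ⟨y, d, Or.inr rfl, hdl, rfl⟩
      · exact ⟨x, d, Or.inl rfl, hdl, rfl⟩
      · exact ⟨y, a, Or.inr rfl, hal, rfl⟩

lemma disj_formPerm {l l' : List ℕ} (h : ∀ a ∈ l, a ∉ l') :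
    Equiv.Perm.Disjoint (formPerm l) (formPerm l') := by
  intro z
  by_cases hz : z ∈ l
  · exact Or.inr (formPerm_apply_of_notMem (h z hz))
  · exact Or.inl (formPerm_apply_of_notMem hz)

lemma swap_disj_formPerm {x y : ℕ} {l : List ℕ} (hx : x ∉ l) (hy : y ∉ l) :
    Equiv.Perm.Disjoint (Equiv.swap x y) (formPerm l) := by
  intro z
  by_cases hz : z ∈ l
  · exact Or.inl (Equiv.swap_apply_of_ne_of_ne (fun h => hx (h ▸ hz)) (fun h => hy (h ▸ hz)))
  · exact Or.inr (formPerm_apply_of_notMem hz)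

lemma aux_word {n x y : ℕ} (hxn : n < x) (hyn : n < y) (hxy : x ≠ y) :
    ∀ L : List (List ℕ), (∀ l ∈ L, l.Nodup) → (∀ l ∈ L, 2 ≤ l.length) →
      (∀ l ∈ L, ∀ v ∈ l, v ≤ n) → L.Pairwise (fun l l' => ∀ a ∈ l, a ∉ l') →
    ∃ ts : List (Equiv.Perm ℕ),
      ts.prod = ((L.map formPerm).prod)⁻¹ * (Equiv.swap x y) ^ L.length ∧ ts.Nodup ∧
      ∀ t ∈ ts, ∃ u v, (u = x ∨ u = y) ∧ (∃ l ∈ L, v ∈ l) ∧ t = Equiv.swap u v := by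
  intro L
  induction L with
  | nil => exact fun _ _ _ _ => ⟨[], by simp, by simp, by simp⟩
  | cons l L' ih =>
    intro hnd hlen hmem hdisj
    obtain ⟨ts', hp', hnd', hmem'⟩ := ih (fun l h => hnd l (by simp [h]))
      (fun l h => hlen l (by simp [h])) (fun l h => hmem l (by simp [h]))
      (List.Pairwise.of_cons hdisj)
    obtain ⟨w, hw, hwnd, hwmem⟩ := cycle_word hxn hyn hxy l (hnd l (by simp))
      (hlen l (by simp)) (hmem l (by simp))
    have hdisj1 : ∀ l' ∈ L', ∀ a ∈ l, a ∉ l' := fun l' hl' =>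
      (List.pairwise_cons.1 hdisj).1 l' hl'
    have hxnl : ∀ l' ∈ L', x ∉ l' := fun l' hl' h =>
      absurd (hmem l' (by simp [hl']) x h) (by omega)
    have hynl : ∀ l' ∈ L', y ∉ l' := fun l' hl' h =>
      absurd (hmem l' (by simp [hl']) y h) (by omega)
    set P' := (L'.map formPerm).prod with hP'
    have hcomm1 : Commute (Equiv.swap x y) P' := by
      refine Commute.list_prod_right _ _ ?_
      intro g hg
      obtain ⟨l', hl', rfl⟩ := List.mem_map.1 hg
      exact (swap_disj_formPerm (hxnl l' hl') (hynl l' hl')).commute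
    have hcomm2 : Commute (formPerm l) P' := by
      refine Commute.list_prod_right _ _ ?_
      intro g hg
      obtain ⟨l', hl', rfl⟩ := List.mem_map.1 hg
      exact (disj_formPerm (hdisj1 l' hl')).commute
    refine ⟨w ++ ts', ?_, ?_, ?_⟩
    · rw [List.prod_append, hw, hp']
      rw [List.map_cons, List.prod_cons, mul_inv_rev, List.length_cons, pow_succ]
      simp only [← mul_assoc]
      rw [mul_assoc ((formPerm l)⁻¹) (Equiv.swap x y) P'⁻¹, hcomm1.inv_right.eq,
        ← mul_assoc, hcomm2.inv_inv.eq,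
        mul_assoc (P'⁻¹ * (formPerm l)⁻¹) (Equiv.swap x y) (Equiv.swap x y ^ L'.length),
        ((Commute.refl (Equiv.swap x y)).pow_right L'.length).eq, ← mul_assoc]
    · rw [List.nodup_append]
      refine ⟨hwnd, hnd', ?_⟩
      intro s hs _ hs' rfl
      obtain ⟨u, v, hu, hv, rfl⟩ := hwmem s hs
      obtain ⟨u', v', hu', ⟨l', hl', hv'⟩, heq⟩ := hmem' _ hs'
      have := swap_inj_aux hxn hyn hu hu' (hmem l (by simp) v hv)
        (hmem l' (by simp [hl']) v' hv') heq
      exact hdisj1 l' hl' v hv (this.2 ▸ hv')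
    · intro t ht
      rcases List.mem_append.1 ht with ht | ht
      · obtain ⟨u, v, hu, hv, rfl⟩ := hwmem t ht
        exact ⟨u, v, hu, ⟨l, by simp, hv⟩, rfl⟩
      · obtain ⟨u, v, hu, ⟨l', hl', hv⟩, rfl⟩ := hmem' t ht
        exact ⟨u, v, hu, ⟨l', by simp [hl'], hv⟩, rfl⟩

theorem stmt4 (n : ℕ) (L : List (List ℕ)) (hnd : ∀ l ∈ L, l.Nodup)
    (hlen : ∀ l ∈ L, 2 ≤ l.length) (hmem : ∀ l ∈ L, ∀ a ∈ l, 1 ≤ a ∧ a ≤ n)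
    (hdisj : L.Pairwise fun l l' => ∀ a ∈ l, a ∉ l')
    (σ : Equiv.Perm ℕ) (hσ : σ = (L.map List.formPerm).prod) :
    ∃ ts : List (Equiv.Perm ℕ),
      ts.prod = σ⁻¹ ∧ ts.Pairwise (· ≠ ·) ∧
      ∀ t ∈ ts, (∃ a b : ℕ, a ≠ b ∧ t = Equiv.swap a b) ∧
        (t (n+1) ≠ n+1 ∨ t (n+2) ≠ n+2) := by
  obtain ⟨ts₀, hp, hnd₀, hm⟩ := aux_word (n := n) (x := n+1) (y := n+2)
    (by omega) (by omega) (by omega) L hnd hlen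
    (fun l hl v hv => (hmem l hl v hv).2) hdisj
  set s : Equiv.Perm ℕ := Equiv.swap (n+1) (n+2) with hs
  have hss : s * s = 1 := Equiv.swap_mul_self _ _
  have hprop : ∀ t ∈ ts₀, (∃ a b : ℕ, a ≠ b ∧ t = Equiv.swap a b) ∧
      (t (n+1) ≠ n+1 ∨ t (n+2) ≠ n+2) := by
    intro t ht
    obtain ⟨u, v, hu, ⟨l, hl, hv⟩, rfl⟩ := hm t ht
    have hvn : v ≤ n := (hmem l hl v hv).2
    have huv : u ≠ v := by omega
    refine ⟨⟨u, v, huv, rfl⟩, ?_⟩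
    rcases hu with rfl | rfl
    · left
      rw [Equiv.swap_apply_left]
      omega
    · right
      rw [Equiv.swap_apply_left]
      omega
  rcases Nat.even_or_odd L.length with he | ho
  · refine ⟨ts₀, ?_, hnd₀, hprop⟩
    have h1 : s ^ L.length = 1 := by
      obtain ⟨q, hq⟩ := he
      rw [hq, ← two_mul, pow_mul, pow_two, hss, one_pow]
    rw [hp, h1, mul_one, hσ]
  · refine ⟨ts₀ ++ [s], ?_, ?_, ?_⟩
    · rw [List.prod_append, List.prod_singleton, hp, mul_assoc]
      have h1 : s ^ L.length * s = 1 := by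
        obtain ⟨q, hq⟩ := ho
        have h2 : 2 * q + 1 + 1 = 2 * (q + 1) := by omega
        rw [hq, ← pow_succ, h2, pow_mul, pow_two, hss, one_pow]
      rw [h1, mul_one, hσ]
    · show (ts₀ ++ [s]).Nodup
      rw [List.nodup_append]
      refine ⟨hnd₀, List.nodup_singleton _, ?_⟩
      intro t ht _ ht' rfl
      rw [List.mem_singleton] at ht'
      subst ht'
      obtain ⟨u, v, hu, ⟨l, hl, hv⟩, heq⟩ := hm s ht
      have hvn : v ≤ n := (hmem l hl v hv).2
      have h1 := DFunLike.congr_fun heq v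
      rw [Equiv.swap_apply_right] at h1
      rw [hs, Equiv.swap_apply_of_ne_of_ne (by omega) (by omega)] at h1
      omega
    · intro t ht
      rcases List.mem_append.1 ht with ht | ht
      · exact hprop t ht
      · rw [List.mem_singleton] at ht
        subst ht
        refine ⟨⟨n+1, n+2, by omega, rfl⟩, Or.inl ?_⟩
        rw [hs, Equiv.swap_apply_left]
        omega
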